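/- Let P be a finite nonempty set of points in the Euclidean plane ℝ² and let s ∈ ℝ² \ P be such that all pairwise Euclidean distances among points of P ∪ {s} are pairwise distinct (so that minimum spanning trees are unique). Let T be the minimum spanning tree of P, let T' be the minimum spanning tree of P ∪ {s}, let N be the set of neighbours of s in T', and let B_N = { e_{xy} : x, y ∈ N, x ≠ y } be the set of bottleneck edges of pairs of N in T. Then the total length of T' equals the total length of T, plus the sum of dist(s, x) over x ∈ N, minus the sum of the lengths of the edges in B_N. -/

import Mathlib

open scoped BigOperators

noncomputable section

/-- The Euclidean plane. -/
abbrev Pt : Type := EuclideanSpace ℝ (Fin 2)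

/-- The length of an edge (an unordered pair of points): the Euclidean
distance between its endpoints. -/
def edgeLen : Sym2 Pt → ℝ :=
  Sym2.lift ⟨fun a b => dist a b, fun a b => dist_comm a b⟩

/-- The total length of a graph on the plane: the sum of the Euclidean
lengths of its edges. -/
def glength (G : SimpleGraph Pt) : ℝ := ∑ᶠ e ∈ G.edgeSet, edgeLen e

/-- `G` is a spanning tree of the point set `V`: all its edges join points of
`V`, it is acyclic, and all points of `V` are pairwise connected in `G`. -/
def IsSpanningTreeOn (V : Set Pt) (G : SimpleGraph Pt) : Prop :=
  (∀ ⦃x y : Pt⦄, G.Adj x y → x ∈ V ∧ y ∈ V) ∧ G.IsAcyclic ∧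
    ∀ x ∈ V, ∀ y ∈ V, G.Reachable x y

/-- `G` is a minimum spanning tree of the point set `V`. -/
def IsMSTOn (V : Set Pt) (G : SimpleGraph Pt) : Prop :=
  IsSpanningTreeOn V G ∧
    ∀ H : SimpleGraph Pt, IsSpanningTreeOn V H → glength G ≤ glength H

/-- The edges of `T` have pairwise distinct lengths. -/
def DistinctEdgeLengths (T : SimpleGraph Pt) : Prop :=
  ∀ e ∈ T.edgeSet, ∀ f ∈ T.edgeSet, edgeLen e = edgeLen f → e = f

/-- `e` is the (unique) edge of maximum length on the (unique) path in `T`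
from `x` to `y`: it is an edge of `T` lying on every path from `x` to `y`,
and on every such path its length is maximal. -/
def BottleneckEdge (T : SimpleGraph Pt) (x y : Pt) (e : Sym2 Pt) : Prop :=
  e ∈ T.edgeSet ∧
    ∀ p : T.Walk x y, p.IsPath → e ∈ p.edges ∧ ∀ f ∈ p.edges, edgeLen f ≤ edgeLen e

namespace MSTAux

open SimpleGraph

lemma edgeLen_mk (a b : Pt) : edgeLen s(a, b) = dist a b := rfl

/-- If all edges of a walk (in any graph) have endpoints reachable in `K`,
then the walk's endpoints are reachable in `K`. -/
lemma reach_of_walk {G K : SimpleGraph Pt} {x y : Pt} (q : G.Walk x y)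
    (h : ∀ c d : Pt, s(c, d) ∈ q.edges → K.Reachable c d) : K.Reachable x y := by
  induction q with
  | nil => exact Reachable.refl _
  | @cons a b c hadj p ih =>
    refine (h a b (by simp)).trans (ih fun c d hcd => h c d ?_)
    simp [hcd]

/-- Endpoint-splitting lemma: in a walk with nodup edges containing edge `s(u,v)`,
if all other edges have `K`-reachable endpoints, the walk endpoints connect
to `u`, `v` in one of the two orders. -/
lemma esplit {G K : SimpleGraph Pt} {u v : Pt} {x y : Pt} (q : G.Walk x y)
    (hnd : q.edges.Nodup) (he : s(u, v) ∈ q.edges)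
    (hR : ∀ c d : Pt, s(c, d) ∈ q.edges → s(c, d) ≠ s(u, v) → K.Reachable c d) :
    (K.Reachable x u ∧ K.Reachable v y) ∨ (K.Reachable x v ∧ K.Reachable u y) := by
  induction q with
  | nil => simp at he
  | @cons a b c hadj p ih =>
    rw [SimpleGraph.Walk.edges_cons] at hnd he hR
    rcases List.mem_cons.mp he with h1 | h2
    · have hnotin : s(u, v) ∉ p.edges := h1 ▸ (List.nodup_cons.mp hnd).1
      have hrest : K.Reachable b c :=
        reach_of_walk p (fun c' d' hcd => hR c' d' (List.mem_cons_of_mem _ hcd)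
          (fun hh => hnotin (hh ▸ hcd)))
      rcases Sym2.eq_iff.mp h1 with ⟨rfl, rfl⟩ | ⟨rfl, rfl⟩
      · exact Or.inl ⟨Reachable.refl _, hrest⟩
      · exact Or.inr ⟨Reachable.refl _, hrest⟩
    · have hfirst : s(a, b) ≠ s(u, v) := by
        intro hh
        exact (List.nodup_cons.mp hnd).1 (hh ▸ h2)
      have hab : K.Reachable a b := hR a b List.mem_cons_self hfirst
      rcases ih (List.nodup_cons.mp hnd).2 h2
          (fun c' d' hcd hne => hR c' d' (List.mem_cons_of_mem _ hcd) hne) with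
        ⟨hh1, hh2⟩ | ⟨hh1, hh2⟩
      · exact Or.inl ⟨hab.trans hh1, hh2⟩
      · exact Or.inr ⟨hab.trans hh1, hh2⟩

/-- In an acyclic graph, each edge is a bridge. -/
lemma bridge_sep {G : SimpleGraph Pt} (hac : G.IsAcyclic) {u v : Pt} (h : G.Adj u v) :
    ¬ (G.deleteEdges {s(u, v)}).Reachable u v :=
  (isBridge_iff.mp ((isAcyclic_iff_forall_adj_isBridge.mp hac) h))

/-- Removing an edge lying on a path disconnects the path's endpoints (acyclic case). -/
lemma not_reach_delete_of_mem_path {G : SimpleGraph Pt} (hac : G.IsAcyclic) {x y : Pt}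
    (p : G.Walk x y) (hp : p.IsPath) {e : Sym2 Pt} (he : e ∈ p.edges) :
    ¬ (G.deleteEdges {e}).Reachable x y := by
  induction p with
  | nil => simp at he
  | @cons a b c hadj q ih =>
    rw [SimpleGraph.Walk.edges_cons] at he
    rw [SimpleGraph.Walk.cons_isPath_iff] at hp
    rcases List.mem_cons.mp he with h1 | h2
    · subst h1
      intro hreach
      have hbq : (G.deleteEdges {s(a, b)}).Reachable b c := by
        refine reach_of_walk q (fun c' d' hcd => ?_)
        have hne : s(c', d') ≠ s(a, b) := by
          intro hh
          exact hp.2 (q.fst_mem_support_of_mem_edges (hh ▸ hcd))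
        exact (SimpleGraph.deleteEdges_adj.mpr
          ⟨q.adj_of_mem_edges hcd, by simpa using hne⟩).reachable
      exact bridge_sep hac hadj (hreach.trans hbq.symm)
    · intro hreach
      have hne : s(a, b) ≠ e := by
        intro hh
        exact hp.2 (q.fst_mem_support_of_mem_edges (hh ▸ h2))
      have hab : (G.deleteEdges {e}).Reachable a b :=
        (SimpleGraph.deleteEdges_adj.mpr ⟨hadj, by simpa using hne⟩).reachable
      exact ih hp.1 h2 (hab.symm.trans hreach)

lemma edgeSet_finite {V : Set Pt} (hV : V.Finite) {G : SimpleGraph Pt}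
    (hG : ∀ ⦃x y : Pt⦄, G.Adj x y → x ∈ V ∧ y ∈ V) : G.edgeSet.Finite := by
  refine ((hV.prod hV).image (Function.uncurry Sym2.mk)).subset ?_
  intro e he
  induction e with
  | _ x y =>
    exact ⟨(x, y), ⟨(hG he).1, (hG he).2⟩, rfl⟩

/-- Splitting off the first edge of a path. -/
lemma cons_decomp {G : SimpleGraph Pt} {a u : Pt} (w : G.Walk a u) (hw : w.IsPath)
    (hne : a ≠ u) :
    ∃ (x : Pt) (h : G.Adj a x) (r : G.Walk x u),
      a ∉ r.support ∧ (∀ f ∈ r.edges, f ∈ w.edges) := by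
  cases w with
  | nil => exact absurd rfl hne
  | cons h r =>
    rw [SimpleGraph.Walk.cons_isPath_iff] at hw
    exact ⟨_, h, r, hw.2, fun f hf => by simp [hf]⟩


/-- The exchange lemma: if `G` is an MST on `V`, `s(u,v)` an edge of `G`, and
`a, b ∈ V` are separated by removing that edge, then `dist u v ≤ dist a b`. -/
lemma mst_swap_le {V : Set Pt} (hV : V.Finite) {G : SimpleGraph Pt} (hG : IsMSTOn V G)
    {u v a b : Pt} (he : G.Adj u v) (ha : a ∈ V) (hb : b ∈ V) (hab : a ≠ b)
    (hsep : ¬ (G.deleteEdges {s(u, v)}).Reachable a b) :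
    dist u v ≤ dist a b := by
  by_cases heq : s(a, b) = s(u, v)
  · rcases Sym2.eq_iff.mp heq with ⟨rfl, rfl⟩ | ⟨rfl, rfl⟩
    · exact le_refl _
    · exact le_of_eq (_root_.dist_comm _ _)
  set D := G.deleteEdges {s(u, v)} with hD
  set H := D ⊔ SimpleGraph.edge a b with hH
  have hDG : D ≤ G := SimpleGraph.deleteEdges_le _
  have hDH : D ≤ H := le_sup_left
  have hGab : s(a, b) ∉ G.edgeSet := by
    intro hmem
    exact hsep ((SimpleGraph.deleteEdges_adj.mpr ⟨hmem, by simpa using heq⟩).reachable)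
  have hHes : H.edgeSet = (G.edgeSet \ {s(u, v)}) ∪ {s(a, b)} := by
    rw [hH, SimpleGraph.edgeSet_sup, SimpleGraph.edgeSet_deleteEdges,
      SimpleGraph.edge_edgeSet_of_ne hab]
  have hHadjab : H.Adj a b := by
    rw [hH, SimpleGraph.sup_adj, SimpleGraph.edge_adj]
    exact Or.inr ⟨Or.inl ⟨rfl, rfl⟩, hab⟩
  -- H is a spanning tree on V
  have hedges : ∀ ⦃x y : Pt⦄, H.Adj x y → x ∈ V ∧ y ∈ V := by
    intro x y hxy
    rw [hH, SimpleGraph.sup_adj] at hxy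
    rcases hxy with h | h
    · exact hG.1.1 (hDG h)
    · rw [SimpleGraph.edge_adj] at h
      rcases h.1 with ⟨rfl, rfl⟩ | ⟨rfl, rfl⟩
      · exact ⟨ha, hb⟩
      · exact ⟨hb, ha⟩
  classical
  have hacyc : H.IsAcyclic := by
    intro w c hc
    by_cases hmem : s(a, b) ∈ c.edges
    · have hnb : ¬ H.IsBridge s(a, b) := by
        rw [SimpleGraph.isBridge_iff_adj_and_forall_cycle_notMem ((SimpleGraph.mem_edgeSet _).mpr hHadjab)]
        push_neg
        exact ⟨w, c, hc, hmem⟩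
      rw [SimpleGraph.isBridge_iff] at hnb
      push_neg at hnb
      have hreach := hnb
      have hle : (H \ SimpleGraph.fromEdgeSet {s(a, b)}) ≤ D := by
        intro x y hxy
        rcases hxy with ⟨hxy1, hxy2⟩
        rw [hH, SimpleGraph.sup_adj] at hxy1
        rcases hxy1 with h | h
        · exact h
        · rw [SimpleGraph.edge_adj] at h
          exfalso
          apply hxy2
          rw [SimpleGraph.fromEdgeSet_adj]
          rcases h.1 with ⟨rfl, rfl⟩ | ⟨rfl, rfl⟩
          · exact ⟨rfl, h.2⟩
          · exact ⟨Sym2.eq_swap, h.2⟩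
      exact hsep (hreach.mono hle)
    · have hsub : ∀ f ∈ c.edges, f ∈ D.edgeSet := by
        intro f hf
        have hfH := c.edges_subset_edgeSet hf
        rw [hHes] at hfH
        rcases hfH with h | h
        · rwa [SimpleGraph.edgeSet_deleteEdges]
        · exact absurd (Set.mem_singleton_iff.mp h ▸ hf) hmem
      have hc' : (c.transfer D hsub).IsCycle := hc.transfer hsub
      have := ((c.transfer D hsub).mapLe hDG)
      exact hG.1.2.1 _ (hc'.mapLe hDG)
  have hconn : ∀ x ∈ V, ∀ y ∈ V, H.Reachable x y := by
    -- first, H.Reachable u v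
    have huvH : H.Reachable u v := by
      obtain ⟨w0⟩ := hG.1.2.2 a ha b hb
      let p := w0.toPath
      have hpe : ∀ c d : Pt, s(c, d) ∈ (p : G.Walk a b).edges → s(c, d) ≠ s(u, v) →
          D.Reachable c d := by
        intro c d hcd hne
        exact (SimpleGraph.deleteEdges_adj.mpr
          ⟨(p : G.Walk a b).adj_of_mem_edges hcd, by simpa using hne⟩).reachable
      have hmem : s(u, v) ∈ (p : G.Walk a b).edges := by
        by_contra hnot
        exact hsep (reach_of_walk (p : G.Walk a b)
          (fun c d hcd => hpe c d hcd (fun hh => hnot (hh ▸ hcd))))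
      rcases esplit (p : G.Walk a b) p.2.edges_nodup hmem hpe with ⟨h1, h2⟩ | ⟨h1, h2⟩
      · exact ((h1.mono hDH).symm.trans (hHadjab.reachable.trans (h2.mono hDH).symm))
      · exact (h2.mono hDH).trans ((hHadjab.reachable.symm).trans (h1.mono hDH))
    intro x hx y hy
    obtain ⟨w0⟩ := hG.1.2.2 x hx y hy
    refine reach_of_walk w0 (fun c d hcd => ?_)
    by_cases hcduv : s(c, d) = s(u, v)
    · rcases Sym2.eq_iff.mp hcduv with ⟨rfl, rfl⟩ | ⟨rfl, rfl⟩
      · exact huvH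
      · exact huvH.symm
    · exact (SimpleGraph.deleteEdges_adj.mpr
        ⟨w0.adj_of_mem_edges hcd, by simpa using hcduv⟩).reachable.mono hDH
  -- lengths
  have hGfin : G.edgeSet.Finite := edgeSet_finite hV hG.1.1
  have hHfin : H.edgeSet.Finite := by
    rw [hHes]
    exact hGfin.diff.union (Set.finite_singleton _)
  have hlenH : glength H = glength G - edgeLen s(u, v) + edgeLen s(a, b) := by
    have h1 : glength H = (∑ᶠ e ∈ (G.edgeSet \ {s(u, v)}), edgeLen e) + edgeLen s(a, b) := by
      rw [glength, hHes, finsum_mem_union _ hGfin.diff (Set.finite_singleton _),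
        finsum_mem_singleton]
      · rw [Set.disjoint_singleton_right]
        exact fun hmem => hGab hmem.1
    have h2 : glength G = (∑ᶠ e ∈ (G.edgeSet \ {s(u, v)}), edgeLen e) + edgeLen s(u, v) := by
      have : G.edgeSet = (G.edgeSet \ {s(u, v)}) ∪ {s(u, v)} := by
        rw [Set.diff_union_self, Set.union_eq_self_of_subset_right]
        simpa using he
      rw [glength]
      conv_lhs => rw [this]
      rw [finsum_mem_union _ hGfin.diff (Set.finite_singleton _), finsum_mem_singleton]
      rw [Set.disjoint_singleton_right]
      exact fun hmem => hmem.2 rfl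
    rw [h1, h2]
    ring
  have hmin := hG.2 H ⟨hedges, hacyc, hconn⟩
  rw [hlenH] at hmin
  have : edgeLen s(u, v) ≤ edgeLen s(a, b) := by linarith
  simpa [edgeLen_mk] using this

end MSTAux

open MSTAux SimpleGraph in
theorem stmt9 (P : Finset Pt) (hP : P.Nonempty) (s : Pt) (hs : s ∉ P)
    (hdistinct : ∀ x ∈ insert s (P : Set Pt), ∀ y ∈ insert s (P : Set Pt),
      ∀ u ∈ insert s (P : Set Pt), ∀ v ∈ insert s (P : Set Pt),
      x ≠ y → u ≠ v → dist x y = dist u v → s(x, y) = s(u, v))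
    (T T' : SimpleGraph Pt)
    (hT : IsMSTOn ↑P T) (hT' : IsMSTOn (insert s ↑P) T')
    (B : Set (Sym2 Pt))
    (hB : B = { e | ∃ x ∈ T'.neighborSet s, ∃ y ∈ T'.neighborSet s,
      x ≠ y ∧ BottleneckEdge T x y e }) :
    glength T' =
      glength T + (∑ᶠ x ∈ T'.neighborSet s, dist s x) - ∑ᶠ e ∈ B, edgeLen e := by
  classical
  have hPfin : (P : Set Pt).Finite := P.finite_toSet
  have hV'fin : (insert s (P : Set Pt)).Finite := hPfin.insert s
  have hTedge := hT.1.1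
  have hT'edge := hT'.1.1
  have hTac : T.IsAcyclic := hT.1.2.1
  have hT'ac : T'.IsAcyclic := hT'.1.2.1
  have hTfin : T.edgeSet.Finite := edgeSet_finite hPfin hTedge
  have hT'fin : T'.edgeSet.Finite := edgeSet_finite hV'fin hT'edge
  have hPV' : (P : Set Pt) ⊆ insert s (P : Set Pt) := Set.subset_insert _ _
  have hsP : ∀ {x : Pt}, x ∈ insert s (P : Set Pt) → x ≠ s → x ∈ (P : Set Pt) := by
    intro x hx hxs
    rcases Set.mem_insert_iff.mp hx with rfl | h
    · exact absurd rfl hxs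
    · exact h
  have wInj : ∀ {c d c' d' : Pt}, c ∈ (P : Set Pt) → d ∈ (P : Set Pt) →
      c' ∈ insert s (P : Set Pt) → d' ∈ insert s (P : Set Pt) → c ≠ d → c' ≠ d' →
      dist c d = dist c' d' → s(c, d) = s(c', d') := by
    intro c d c' d' h1 h2 h3 h4 h5 h6 h7
    exact hdistinct c (hPV' h1) d (hPV' h2) c' h3 d' h4 h5 h6 h7
  have hsnotinT : ∀ {e : Sym2 Pt}, e ∈ T.edgeSet → s ∉ e := by
    intro e he
    induction e with
    | _ c d =>
      intro hse
      rcases Sym2.mem_iff.mp hse with rfl | rfl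
      · exact hs (Finset.mem_coe.mp (hTedge ((mem_edgeSet _).mp he)).1)
      · exact hs (Finset.mem_coe.mp (hTedge ((mem_edgeSet _).mp he)).2)
  -- Step 1: edges of T' avoiding s are edges of T.
  have S1 : ∀ {c d : Pt}, T'.Adj c d → c ≠ s → d ≠ s → T.Adj c d := by
    intro u v huv hus hvs
    by_contra hnT
    have hu : u ∈ (P : Set Pt) := hsP (hT'edge huv).1 hus
    have hv : v ∈ (P : Set Pt) := hsP (hT'edge huv).2 hvs
    obtain ⟨w0⟩ := hT.1.2.2 u hu v hv
    set p := w0.toPath with hp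
    have hbr : ¬ (T'.deleteEdges {s(u, v)}).Reachable u v := bridge_sep hT'ac huv
    have hcross : ¬ ∀ c d : Pt, s(c, d) ∈ p.1.edges →
        (T'.deleteEdges {s(u, v)}).Reachable c d := fun h => hbr (reach_of_walk _ h)
    push_neg at hcross
    obtain ⟨c, d, hcd, hncd⟩ := hcross
    have hTcd : T.Adj c d := p.1.adj_of_mem_edges hcd
    have h1 : dist u v ≤ dist c d :=
      mst_swap_le hV'fin hT' huv (hPV' (hTedge hTcd).1) (hPV' (hTedge hTcd).2) hTcd.ne hncd
    have h2 : dist c d ≤ dist u v :=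
      mst_swap_le hPfin hT hTcd hu hv huv.ne
        (not_reach_delete_of_mem_path hTac _ p.2 hcd)
    have heq : s(c, d) = s(u, v) :=
      wInj (hTedge hTcd).1 (hTedge hTcd).2 (hPV' hu) (hPV' hv) hTcd.ne huv.ne
        (le_antisymm h2 h1)
    exact hnT ((mem_edgeSet _).mp (heq ▸ ((mem_edgeSet _).mpr hTcd)))
  -- Step 2: bottleneck edges are not edges of T'.
  have S2 : ∀ e ∈ B, e ∉ T'.edgeSet := by
    intro e heB
    rw [hB] at heB
    obtain ⟨x, hx, y, hy, hxy, hbot⟩ := heB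
    induction e with
    | _ u v =>
      intro heT'
      have hT'uv : T'.Adj u v := (mem_edgeSet _).mp heT'
      have hTuv : T.Adj u v := (mem_edgeSet _).mp hbot.1
      have hxadj : T'.Adj s x := hx
      have hyadj : T'.Adj s y := hy
      have hxP : x ∈ (P : Set Pt) := hsP (hT'edge hxadj).2 hxadj.ne'
      have hyP : y ∈ (P : Set Pt) := hsP (hT'edge hyadj).2 hyadj.ne'
      obtain ⟨w0⟩ := hT.1.2.2 x hxP y hyP
      set p := w0.toPath with hp
      obtain ⟨hep, hmax⟩ := hbot.2 p.1 p.2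
      have hbr : ¬ (T'.deleteEdges {s(u, v)}).Reachable u v := bridge_sep hT'ac hT'uv
      have hsnot : s ∉ s(u, v) := hsnotinT hbot.1
      have hKxs : (T'.deleteEdges {s(u, v)}).Adj x s := by
        refine deleteEdges_adj.mpr ⟨hxadj.symm, ?_⟩
        simp only [Set.mem_singleton_iff]
        exact fun hh => hsnot (hh ▸ Sym2.mem_mk_right x s)
      have hKsy : (T'.deleteEdges {s(u, v)}).Adj s y := by
        refine deleteEdges_adj.mpr ⟨hyadj, ?_⟩
        simp only [Set.mem_singleton_iff]
        exact fun hh => hsnot (hh ▸ Sym2.mem_mk_left s y)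
      have hKxy : (T'.deleteEdges {s(u, v)}).Reachable x y :=
        hKxs.reachable.trans hKsy.reachable
      have hR : ∀ c d : Pt, s(c, d) ∈ p.1.edges → s(c, d) ≠ s(u, v) →
          (T'.deleteEdges {s(u, v)}).Reachable c d := by
        intro c d hcd hne
        by_contra hn
        have hTcd : T.Adj c d := p.1.adj_of_mem_edges hcd
        have h1 : dist u v ≤ dist c d :=
          mst_swap_le hV'fin hT' hT'uv (hPV' (hTedge hTcd).1) (hPV' (hTedge hTcd).2)
            hTcd.ne hn
        have h2 : edgeLen s(c, d) ≤ edgeLen s(u, v) := hmax _ hcd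
        rw [edgeLen_mk, edgeLen_mk] at h2
        exact hne (wInj (hTedge hTcd).1 (hTedge hTcd).2 (hT'edge hT'uv).1
          (hT'edge hT'uv).2 hTcd.ne hT'uv.ne (le_antisymm h2 h1))
      rcases esplit p.1 p.2.edges_nodup hep hR with ⟨h1, h2⟩ | ⟨h1, h2⟩
      · exact hbr (h1.symm.trans (hKxy.trans h2.symm))
      · exact hbr (h2.trans (hKxy.symm.trans h1))
  -- Step 3: edges of T not in T' are bottleneck edges.
  have S3 : ∀ {u v : Pt}, T.Adj u v → s(u, v) ∉ T'.edgeSet → s(u, v) ∈ B := by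
    intro u v hTuv hnT'
    have hu : u ∈ (P : Set Pt) := (hTedge hTuv).1
    have hv : v ∈ (P : Set Pt) := (hTedge hTuv).2
    have hus : u ≠ s := fun h => hs (Finset.mem_coe.mp (h ▸ hu))
    have hvs : v ≠ s := fun h => hs (Finset.mem_coe.mp (h ▸ hv))
    obtain ⟨w0⟩ := hT'.1.2.2 u (hPV' hu) v (hPV' hv)
    set q := w0.toPath with hqdef
    have hqp : q.1.IsPath := q.2
    have hbrT : ¬ (T.deleteEdges {s(u, v)}).Reachable u v := bridge_sep hTac hTuv
    have hRwalk : ∀ (g : Sym2 Pt) {a b : Pt} (w : T'.Walk a b), s ∉ w.support →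
        g ∉ w.edges → (T.deleteEdges {g}).Reachable a b := by
      intro g a b w hsw hgw
      refine reach_of_walk w (fun c d hcd => ?_)
      have hc := w.fst_mem_support_of_mem_edges hcd
      have hd := w.snd_mem_support_of_mem_edges hcd
      have hTcd : T.Adj c d := S1 (w.adj_of_mem_edges hcd)
        (fun h => hsw (h ▸ hc)) (fun h => hsw (h ▸ hd))
      refine (deleteEdges_adj.mpr ⟨hTcd, ?_⟩).reachable
      simp only [Set.mem_singleton_iff]
      exact fun hh => hgw (hh ▸ hcd)
    have hsq : s ∈ q.1.support := by
      by_contra hns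
      exact hbrT (hRwalk s(u, v) q.1 hns
        (fun h => hnT' (q.1.edges_subset_edgeSet h)))
    have hq1p : (q.1.takeUntil s hsq).IsPath := hqp.takeUntil hsq
    have hq2p : (q.1.dropUntil s hsq).IsPath := hqp.dropUntil hsq
    obtain ⟨x, hsx, r, hsr, hre⟩ := cons_decomp (q.1.takeUntil s hsq).reverse
      hq1p.reverse hus.symm
    obtain ⟨y, hsy, r2, hsr2, hre2⟩ := cons_decomp (q.1.dropUntil s hsq) hq2p hvs.symm
    have hreq : ∀ f ∈ r.edges, f ∈ q.1.edges := by
      intro f hf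
      have h2 := hre f hf
      rw [SimpleGraph.Walk.edges_reverse, List.mem_reverse] at h2
      exact q.1.edges_takeUntil_subset hsq h2
    have hre2q : ∀ f ∈ r2.edges, f ∈ q.1.edges := by
      intro f hf
      exact q.1.edges_dropUntil_subset hsq (hre2 f hf)
    have hxu : (T.deleteEdges {s(u, v)}).Reachable x u := hRwalk _ r hsr
      (fun h => hnT' (q.1.edges_subset_edgeSet (hreq _ h)))
    have hyv : (T.deleteEdges {s(u, v)}).Reachable y v := hRwalk _ r2 hsr2
      (fun h => hnT' (q.1.edges_subset_edgeSet (hre2q _ h)))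
    have hxyne : x ≠ y := by
      intro h
      exact hbrT (hxu.symm.trans (h ▸ hyv))
    rw [hB]
    refine ⟨x, (mem_neighborSet _ _ _).mpr hsx, y, (mem_neighborSet _ _ _).mpr hsy,
      hxyne, (mem_edgeSet _).mpr hTuv, ?_⟩
    intro p hpp
    constructor
    · by_contra hnot
      apply hbrT
      have hxy : (T.deleteEdges {s(u, v)}).Reachable x y := by
        refine reach_of_walk p (fun c d hcd => ?_)
        refine (deleteEdges_adj.mpr ⟨p.adj_of_mem_edges hcd, ?_⟩).reachable
        simp only [Set.mem_singleton_iff]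
        exact fun hh => hnot (hh ▸ hcd)
      exact hxu.symm.trans (hxy.trans hyv)
    · intro f hf
      induction f with
      | _ c d =>
        have hTcd : T.Adj c d := p.adj_of_mem_edges hf
        by_cases hfq : s(c, d) ∈ q.1.edges
        · have h := mst_swap_le hV'fin hT' (q.1.adj_of_mem_edges hfq)
            (hPV' hu) (hPV' hv) hTuv.ne (not_reach_delete_of_mem_path hT'ac _ hqp hfq)
          rw [edgeLen_mk, edgeLen_mk]
          exact h
        · by_cases hfg : s(c, d) = s(u, v)
          · exact le_of_eq (by rw [hfg])
          · have hsep : ¬ (T.deleteEdges {s(c, d)}).Reachable u v := by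
              intro hreach
              have hbr2 : ¬ (T.deleteEdges {s(c, d)}).Reachable c d := bridge_sep hTac hTcd
              have hxu2 : (T.deleteEdges {s(c, d)}).Reachable x u := hRwalk _ r hsr
                (fun h => hfq (hreq _ h))
              have hyv2 : (T.deleteEdges {s(c, d)}).Reachable y v := hRwalk _ r2 hsr2
                (fun h => hfq (hre2q _ h))
              have hRp : ∀ c' d' : Pt, s(c', d') ∈ p.edges → s(c', d') ≠ s(c, d) →
                  (T.deleteEdges {s(c, d)}).Reachable c' d' := by
                intro c' d' hcd hne
                refine (deleteEdges_adj.mpr ⟨p.adj_of_mem_edges hcd, ?_⟩).reachable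
                simp only [Set.mem_singleton_iff]
                exact hne
              rcases esplit p hpp.edges_nodup hf hRp with ⟨h1, h2⟩ | ⟨h1, h2⟩
              · exact hbr2 (h1.symm.trans (hxu2.trans (hreach.trans
                  (hyv2.symm.trans h2.symm))))
              · exact hbr2 (h2.trans (hyv2.trans (hreach.symm.trans
                  (hxu2.symm.trans h1))))
            have h := mst_swap_le hPfin hT hTcd hu hv hTuv.ne hsep
            rw [edgeLen_mk, edgeLen_mk]
            exact h
  -- Assembling the sums.
  set N := T'.neighborSet s with hN
  have hNP : N ⊆ (P : Set Pt) := by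
    intro x hx
    exact hsP (hT'edge (hx : T'.Adj s x)).2 (Adj.ne' (hx : T'.Adj s x))
  have hNfin : N.Finite := hPfin.subset hNP
  set E0 : Set (Sym2 Pt) := {e | e ∈ T'.edgeSet ∧ s ∉ e} with hE0
  set Estar : Set (Sym2 Pt) := {e | e ∈ T'.edgeSet ∧ s ∈ e} with hEstar
  have hT'split : T'.edgeSet = Estar ∪ E0 := by
    ext e
    constructor
    · intro h
      by_cases hse : s ∈ e
      · exact Or.inl ⟨h, hse⟩
      · exact Or.inr ⟨h, hse⟩
    · rintro (⟨h, _⟩ | ⟨h, _⟩) <;> exact h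
  have hdisj1 : Disjoint Estar E0 := by
    rw [Set.disjoint_left]
    rintro e ⟨_, h1⟩ ⟨_, h2⟩
    exact h2 h1
  have hstar_eq : Estar = (fun x => s(s, x)) '' N := by
    ext e
    constructor
    · rintro ⟨he, hse⟩
      obtain ⟨z, rfl⟩ := Sym2.mem_iff_exists.mp hse
      exact ⟨z, (mem_edgeSet _).mp he, rfl⟩
    · rintro ⟨z, hz, rfl⟩
      exact ⟨(mem_edgeSet _).mpr (hz : T'.Adj s z), Sym2.mem_mk_left s z⟩
  have hE0T : E0 ⊆ T.edgeSet := by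
    intro e he
    obtain ⟨he1, he2⟩ := he
    induction e with
    | _ c d =>
      rw [Sym2.mem_iff] at he2
      push_neg at he2
      exact (mem_edgeSet _).mpr (S1 ((mem_edgeSet _).mp he1) (fun h => he2.1 h.symm)
        (fun h => he2.2 h.symm))
  have hBeq : B = T.edgeSet \ T'.edgeSet := by
    ext e
    constructor
    · intro heB
      refine ⟨?_, S2 e heB⟩
      rw [hB] at heB
      obtain ⟨_, _, _, _, _, hbot⟩ := heB
      exact hbot.1
    · rintro ⟨h1, h2⟩
      induction e with
      | _ c d => exact S3 ((mem_edgeSet _).mp h1) h2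
  have hTsplit : T.edgeSet = E0 ∪ B := by
    ext e
    constructor
    · intro he
      by_cases he' : e ∈ T'.edgeSet
      · exact Or.inl ⟨he', hsnotinT he⟩
      · rw [hBeq]
        exact Or.inr ⟨he, he'⟩
    · rintro (h | h)
      · exact hE0T h
      · rw [hBeq] at h
        exact h.1
  have hdisj2 : Disjoint E0 B := by
    rw [hBeq, Set.disjoint_left]
    rintro e ⟨h1, _⟩ ⟨_, h2⟩
    exact h2 h1
  have hE0fin : E0.Finite := hT'fin.subset (fun e he => he.1)
  have hstarfin : Estar.Finite := hT'fin.subset (fun e he => he.1)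
  have hBfin : B.Finite := by
    rw [hBeq]
    exact hTfin.diff
  have hsum1 : glength T' = (∑ᶠ e ∈ Estar, edgeLen e) + ∑ᶠ e ∈ E0, edgeLen e := by
    rw [glength]
    conv_lhs => rw [hT'split]
    exact finsum_mem_union hdisj1 hstarfin hE0fin
  have hsum2 : glength T = (∑ᶠ e ∈ E0, edgeLen e) + ∑ᶠ e ∈ B, edgeLen e := by
    rw [glength]
    conv_lhs => rw [hTsplit]
    exact finsum_mem_union hdisj2 hE0fin hBfin
  have hsum3 : (∑ᶠ e ∈ Estar, edgeLen e) = ∑ᶠ x ∈ N, dist s x := by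
    rw [hstar_eq, finsum_mem_image]
    · rfl
    · intro a ha b hb hab
      rcases Sym2.eq_iff.mp hab with ⟨_, h⟩ | ⟨h1, h2⟩
      · exact h
      · exact h2.trans h1
  rw [hsum1, hsum2, hsum3]
  ring


end
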